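/- Let w be a primitive π-clustering word over A = {a_1 < ... < a_d}. Suppose b = a_d, π⁻¹(b) = a_i and π⁻¹(a) = a_{i+1} for some 1 ≤ i < d. Then α_{a,b}(w) is π'-clustering over A for some permutation π' of A, where α_{a,b} sends a to ab and fixes all other letters. -/

import Mathlib

namespace BWTpaper

variable {A : Type*}

/-- Lexicographic `≤` (as a `Bool`) on lists, induced by a strict order `lt` on letters. -/
def lexLe (lt : A → A → Bool) : List A → List A → Bool
  | [], _ => true
  | _ :: _, [] => false
  | x :: xs, y :: ys => if lt x y then true else if lt y x then false else lexLe lt xs ys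

/-- The list of all rotations (conjugates, with multiplicity) of a word. -/
def rotations (w : List A) : List (List A) := (List.range w.length).map (fun i => w.rotate i)

/-- Burrows-Wheeler transform with respect to a strict order `lt` on letters. -/
def bwtBy (lt : A → A → Bool) (w : List A) : List A :=
  ((rotations w).mergeSort (lexLe lt)).filterMap List.getLast?

def stdLt [LinearOrder A] : A → A → Bool := fun x y => decide (x < y)

/-- Burrows-Wheeler transform w.r.t. the order of a `LinearOrder` alphabet. -/
def bwt [LinearOrder A] (w : List A) : List A := bwtBy stdLt w

def Conjugate (u v : List A) : Prop := ∃ x y : List A, u = x ++ y ∧ v = y ++ x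

/-- `u^p`. -/
def wordPow (u : List A) (p : ℕ) : List A := (List.replicate p u).flatten

def Primitive (w : List A) : Prop := w ≠ [] ∧ ∀ (u : List A) (k : ℕ), w = wordPow u k → k = 1

/-- The letters of the alphabet, sorted increasingly w.r.t. `lt`. -/
noncomputable def sortedAlphabet [Fintype A] (lt : A → A → Bool) : List A :=
  Finset.univ.toList.mergeSort (fun x y => !(lt y x))

/-- `w` is `π`-clustering w.r.t. the letter order `lt`:
its BWT is `π(a₁)^{k₁} ⋯ π(a_d)^{k_d}` where `a₁ < ⋯ < a_d` and `k_i = |w|_{π(a_i)}`. -/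
def IsClusteringBy [Fintype A] [DecidableEq A] (lt : A → A → Bool) (π : Equiv.Perm A)
    (w : List A) : Prop :=
  bwtBy lt w = (sortedAlphabet lt).flatMap (fun c => List.replicate (w.count (π c)) (π c))

def IsClustering [Fintype A] [LinearOrder A] (π : Equiv.Perm A) (w : List A) : Prop :=
  IsClusteringBy stdLt π w

/-- The prefix of length `n` of the periodic infinite word `u^ω`. -/
def omegaTake (u : List A) (n : ℕ) : List A := ((List.replicate n u).flatten).take n

/-- The ω-order: `u ≤_ω v` iff `u^ω ≤ v^ω` lexicographically (decided on the first
`|u| + |v|` letters, which suffices by Fine and Wilf). -/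
def omegaLe (lt : A → A → Bool) (u v : List A) : Bool :=
  lexLe lt (omegaTake u (u.length + v.length)) (omegaTake v (u.length + v.length))

/-- Extended Burrows-Wheeler transform of a multiset (list) of words. -/
def ebwtBy (lt : A → A → Bool) (W : List (List A)) : List A :=
  ((W.flatMap rotations).mergeSort (omegaLe lt)).filterMap List.getLast?

/-- A multiset of words is `π`-clustering if its eBWT consists of the blocks
`π(a₁)^{k₁} ⋯ π(a_d)^{k_d}` with `k_i` the total number of occurrences of `π(a_i)`. -/
def IsClusteringMultisetBy [Fintype A] [DecidableEq A] (lt : A → A → Bool)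
    (π : Equiv.Perm A) (W : List (List A)) : Prop :=
  ebwtBy lt W =
    (sortedAlphabet lt).flatMap
      (fun c => List.replicate ((W.map (fun w => w.count (π c))).sum) (π c))

/-- The morphism `α_{a,b} : a ↦ ab`, `c ↦ c` for `c ≠ a`. -/
def alphaM [DecidableEq A] (a b : A) (w : List A) : List A :=
  w.flatMap (fun c => if c = a then [a, b] else [c])

/-- The morphism `α̃_{a,b} : a ↦ ba`, `c ↦ c` for `c ≠ a`. -/
def tildeM [DecidableEq A] (a b : A) (w : List A) : List A :=
  w.flatMap (fun c => if c = a then [b, a] else [c])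

/-! ### Auxiliary lemmas -/

section LexBasics
variable [LinearOrder A]

lemma lexLe_cons_eq (x y : A) (u v : List A) :
    lexLe stdLt (x::u) (y::v) = if x < y then true else if y < x then false else lexLe stdLt u v := by
  simp [lexLe, stdLt]

lemma lexLe_cons_lt {x y : A} (h : x < y) (u v : List A) : lexLe stdLt (x::u) (y::v) = true := by
  simp [lexLe_cons_eq, h]

lemma lexLe_cons_same (c : A) (u v : List A) : lexLe stdLt (c::u) (c::v) = lexLe stdLt u v := by
  simp [lexLe_cons_eq]

lemma lexLe_refl : ∀ l : List A, lexLe stdLt l l = true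
  | [] => rfl
  | x :: xs => by rw [lexLe_cons_same]; exact lexLe_refl xs

lemma lexLe_trans : ∀ l1 l2 l3 : List A, lexLe stdLt l1 l2 = true → lexLe stdLt l2 l3 = true →
    lexLe stdLt l1 l3 = true
  | [], _, _, _, _ => rfl
  | x::xs, [], _, h1, _ => by simp [lexLe] at h1
  | _::_, _::_, [], _, h2 => by simp [lexLe] at h2
  | x::xs, y::ys, z::zs, h1, h2 => by
    rw [lexLe_cons_eq] at h1 h2 ⊢
    rcases lt_trichotomy x y with hxy|hxy|hxy <;> rcases lt_trichotomy y z with hyz|hyz|hyz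
    · simp [hxy.trans hyz]
    · subst hyz; simp [hxy]
    · simp [hyz, not_lt_of_gt hyz] at h2
    · subst hxy; simp [hyz]
    · subst hxy; subst hyz
      simp [lt_irrefl] at h1 h2 ⊢
      exact lexLe_trans xs ys zs h1 h2
    · subst hxy
      simp [hyz, not_lt_of_gt hyz] at h2
    · simp [hxy, not_lt_of_gt hxy] at h1
    · simp [hxy, not_lt_of_gt hxy] at h1
    · simp [hxy, not_lt_of_gt hxy] at h1

lemma lexLe_total : ∀ l1 l2 : List A, lexLe stdLt l1 l2 = true ∨ lexLe stdLt l2 l1 = true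
  | [], _ => Or.inl rfl
  | _::_, [] => Or.inr rfl
  | x::xs, y::ys => by
    rcases lt_trichotomy x y with h|h|h
    · exact Or.inl (lexLe_cons_lt h _ _)
    · subst h; rw [lexLe_cons_same, lexLe_cons_same]; exact lexLe_total xs ys
    · exact Or.inr (lexLe_cons_lt h _ _)

lemma lexLe_antisymm : ∀ l1 l2 : List A, l1.length = l2.length → lexLe stdLt l1 l2 = true →
    lexLe stdLt l2 l1 = true → l1 = l2
  | [], [], _, _, _ => rfl
  | [], _::_, h, _, _ => by simp at h
  | _::_, [], h, _, _ => by simp at h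
  | x::xs, y::ys, hl, h1, h2 => by
    rcases lt_trichotomy x y with h|h|h
    · rw [lexLe_cons_eq] at h2; simp [h, not_lt_of_gt h] at h2
    · subst h
      rw [lexLe_cons_same] at h1 h2
      rw [lexLe_antisymm xs ys (by simpa using hl) h1 h2]
    · rw [lexLe_cons_eq] at h1; simp [h, not_lt_of_gt h] at h1

lemma lexLe_append_left : ∀ (p u v : List A), lexLe stdLt (p++u) (p++v) = lexLe stdLt u v
  | [], _, _ => rfl
  | c::p, u, v => by
    simp only [List.cons_append, lexLe_cons_same]
    exact lexLe_append_left p u v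

end LexBasics

section AlphaBasics
variable [DecidableEq A] (a b : A)

lemma alphaM_nil : alphaM a b [] = [] := rfl

lemma alphaM_cons (c : A) (w : List A) :
    alphaM a b (c::w) = (if c = a then [a,b] else [c]) ++ alphaM a b w := rfl

lemma alphaM_append (u v : List A) : alphaM a b (u ++ v) = alphaM a b u ++ alphaM a b v :=
  List.flatMap_append ..

lemma alphaM_cons_head (c : A) (w : List A) :
    alphaM a b (c :: w) = c :: ((if c = a then [b] else []) ++ alphaM a b w) := by
  by_cases h : c = a <;> simp [alphaM_cons, h]

lemma length_alphaM (w : List A) : (alphaM a b w).length = w.length + w.count a := by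
  induction w with
  | nil => simp [alphaM]
  | cons c w ih =>
    rw [alphaM_cons, List.length_append, ih, List.count_cons]
    by_cases hc : c = a <;> simp [hc] <;> omega

lemma count_alphaM (hab : a ≠ b) (c : A) (w : List A) :
    (alphaM a b w).count c = w.count c + if c = b then w.count a else 0 := by
  induction w with
  | nil => simp [alphaM]
  | cons d w ih =>
    rw [alphaM_cons, List.count_append, ih, List.count_cons, List.count_cons]
    by_cases hd : d = a <;> by_cases hcb : c = b <;>
      simp [hd, hcb, List.count_cons, List.count_singleton] <;>
      split_ifs <;> simp_all <;> omega

lemma alphaM_concat_getLastD (u : List A) (c x : A) :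
    (alphaM a b (u ++ [c])).getLastD x = if c = a then b else c := by
  rw [alphaM_append]
  by_cases h : c = a <;> simp [alphaM, h]

lemma alphaM_ne_nil (w : List A) (hw : w ≠ []) : alphaM a b w ≠ [] := by
  cases w with
  | nil => exact absurd rfl hw
  | cons c w => rw [alphaM_cons_head]; exact List.cons_ne_nil _ _

end AlphaBasics

section Mono
variable [LinearOrder A] [DecidableEq A] (a b : A)

lemma lexLe_alphaM_append (x : List A) : ∀ p q : List A, p.length = q.length →
    lexLe stdLt p q = true → lexLe stdLt (alphaM a b p ++ x) (alphaM a b q ++ x) = true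
  | [], [], _, _ => lexLe_refl _
  | [], _::_, h, _ => by simp at h
  | _::_, [], h, _ => by simp at h
  | c::p, c'::q, hl, hle => by
    rcases lt_trichotomy c c' with h|h|h
    · rw [alphaM_cons_head, alphaM_cons_head, List.cons_append, List.cons_append]
      exact lexLe_cons_lt h _ _
    · subst h
      rw [lexLe_cons_same] at hle
      rw [alphaM_cons, alphaM_cons, List.append_assoc, List.append_assoc, lexLe_append_left]
      exact lexLe_alphaM_append x p q (by simpa using hl) hle
    · rw [lexLe_cons_eq] at hle
      simp [h, not_lt_of_gt h] at hle
  termination_by p q => p.length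

lemma lexLe_alphaM_strict (hab : a < b) : ∀ p q : List A, p.length = q.length →
    lexLe stdLt (p ++ [b]) (q ++ [a]) = true →
    ∀ x y, lexLe stdLt (alphaM a b p ++ x) (alphaM a b q ++ y) = true
  | [], [], _, hle => by
    simp only [List.nil_append] at hle
    rw [lexLe_cons_eq] at hle
    simp [hab, not_lt_of_gt hab] at hle
  | [], _::_, h, _ => by simp at h
  | _::_, [], h, _ => by simp at h
  | c::p, c'::q, hl, hle => by
    intro x y
    rcases lt_trichotomy c c' with h|h|h
    · rw [alphaM_cons_head, alphaM_cons_head, List.cons_append, List.cons_append]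
      exact lexLe_cons_lt h _ _
    · subst h
      simp only [List.cons_append] at hle
      rw [lexLe_cons_same] at hle
      rw [alphaM_cons, alphaM_cons, List.append_assoc, List.append_assoc, lexLe_append_left]
      exact lexLe_alphaM_strict hab p q (by simpa using hl) hle x y
    · simp only [List.cons_append] at hle
      rw [lexLe_cons_eq] at hle
      simp [h, not_lt_of_gt h] at hle
  termination_by p q => p.length

end Mono

section SortUnique
variable {B : Type*}

lemma sorted_eq_of_perm {Le : B → B → Prop} : ∀ {l₁ l₂ : List B}, l₁.Perm l₂ →
    l₁.Pairwise Le → l₂.Pairwise Le →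
    (∀ x ∈ l₁, ∀ y ∈ l₂, Le x y → Le y x → x = y) → l₁ = l₂
  | [], l₂, hp, _, _, _ => (hp.nil_eq).symm ▸ rfl
  | x :: t₁, [], hp, _, _, _ => by simpa using hp.length_eq
  | x :: t₁, y :: t₂, hp, h₁, h₂, hanti => by
    have hx2 : x ∈ y :: t₂ := hp.subset (List.mem_cons_self)
    have hy1 : y ∈ x :: t₁ := hp.symm.subset (List.mem_cons_self)
    have hxy : x = y := by
      rcases List.mem_cons.mp hx2 with h|h
      · exact h
      · rcases List.mem_cons.mp hy1 with h'|h'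
        · exact h'.symm
        · exact hanti x (List.mem_cons_self) y (List.mem_cons_self)
            ((List.pairwise_cons.mp h₁).1 y h') ((List.pairwise_cons.mp h₂).1 x h)
    subst hxy
    have hp' : t₁.Perm t₂ := hp.cons_inv
    have := sorted_eq_of_perm hp' (List.pairwise_cons.mp h₁).2 (List.pairwise_cons.mp h₂).2
      (fun u hu v hv => hanti u (List.mem_cons_of_mem _ hu) v (List.mem_cons_of_mem _ hv))
    rw [this]

end SortUnique

section Rotations

lemma mem_rotations {w r : List A} (h : r ∈ rotations w) :
    ∃ t, t < w.length ∧ r = w.rotate t := by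
  rcases List.mem_map.mp h with ⟨t, ht, rfl⟩
  exact ⟨t, List.mem_range.mp ht, rfl⟩

lemma rotate_mem_rotations (w : List A) (t : ℕ) (hw : 0 < w.length) :
    w.rotate t ∈ rotations w := by
  have : w.rotate t = w.rotate (t % w.length) := (List.rotate_mod w t).symm
  rw [this]
  exact List.mem_map.mpr ⟨t % w.length, List.mem_range.mpr (Nat.mod_lt _ hw), rfl⟩

lemma length_of_mem_rotations {w r : List A} (h : r ∈ rotations w) : r.length = w.length := by
  rcases mem_rotations h with ⟨t, _, rfl⟩
  exact List.length_rotate w t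

lemma ne_nil_of_mem_rotations {w r : List A} (hw : w ≠ []) (h : r ∈ rotations w) : r ≠ [] := by
  have := length_of_mem_rotations h
  intro hr
  rw [hr] at this
  exact hw (List.length_eq_zero_iff.mp this.symm)

lemma rotate_one_mem_rotations {w r : List A} (hw : w ≠ []) (h : r ∈ rotations w) :
    r.rotate 1 ∈ rotations w := by
  rcases mem_rotations h with ⟨t, ht, rfl⟩
  rw [List.rotate_rotate]
  exact rotate_mem_rotations w (t+1) (List.length_pos_iff.mpr hw)

end Rotations

section PermSplit
variable {B C : Type*}

lemma flatMap_append_perm (l : List B) (f g : B → List C) :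
    (l.flatMap (fun x => f x ++ g x)).Perm (l.flatMap f ++ l.flatMap g) := by
  induction l with
  | nil => rfl
  | cons x l ih =>
    simp only [List.flatMap_cons]
    refine ((ih.append_left (f x ++ g x)).trans ?_)
    rw [List.append_assoc, List.append_assoc]
    exact (List.perm_append_comm_assoc (g x) (l.flatMap f) (l.flatMap g)).append_left (f x)

lemma flatMap_if_singleton (l : List B) (p : B → Prop) [DecidablePred p] (f : B → C) :
    l.flatMap (fun x => if p x then [f x] else []) = (l.filter (fun x => decide (p x))).map f := by
  induction l with
  | nil => rfl
  | cons x l ih =>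
    by_cases h : p x <;> simp [List.filter_cons, h, ih]

end PermSplit

section Pos
variable [DecidableEq A] (a b : A) (w : List A)

/-- Start position in `alphaM a b w` of the image of position `t` of `w`. -/
def posA (t : ℕ) : ℕ := (alphaM a b (w.take t)).length

/-- The extra rotation associated with an `a`-initial rotation `r = a·s`: `b·α(s)·a`. -/
def eRot (r : List A) : List A := b :: (alphaM a b r.tail ++ [a])

lemma posA_zero : posA a b w 0 = 0 := rfl

lemma posA_length : posA a b w w.length = (alphaM a b w).length := by
  rw [posA, List.take_length]

lemma posA_succ (t : ℕ) (ht : t < w.length) :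
    posA a b w (t+1) = posA a b w t + (if w[t] = a then 2 else 1) := by
  rw [posA, posA, List.take_succ, List.getElem?_eq_getElem ht, alphaM_append,
    List.length_append]
  by_cases h : w[t] = a <;> simp [alphaM, h]

lemma range_flatMap_posA : ∀ k, k ≤ w.length →
    (List.range k).flatMap
      (fun t => if w[t]? = some a then [posA a b w t, posA a b w t + 1] else [posA a b w t])
      = List.range (posA a b w k)
  | 0, _ => by simp [posA_zero]
  | (k+1), hk => by
    have hklt : k < w.length := hk
    rw [List.range_succ, List.flatMap_append, range_flatMap_posA k (le_of_lt hklt),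
      List.flatMap_cons, List.flatMap_nil, List.append_nil, posA_succ a b w k hklt,
      List.getElem?_eq_getElem hklt]
    by_cases h : w[k] = a <;>
      simp [h, List.range_add, List.range_succ] <;> decide

lemma rotate_posA (t : ℕ) (ht : t ≤ w.length) :
    (alphaM a b w).rotate (posA a b w t) = alphaM a b (w.rotate t) := by
  have hv : alphaM a b w = alphaM a b (w.take t) ++ alphaM a b (w.drop t) := by
    rw [← alphaM_append, List.take_append_drop]
  have hlen : (alphaM a b (w.take t)).length = posA a b w t := rfl
  have hle : posA a b w t ≤ (alphaM a b w).length := by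
    rw [hv, List.length_append, ← hlen]; omega
  rw [List.rotate_eq_drop_append_take hle, hv, List.drop_left' hlen, List.take_left' hlen,
    ← alphaM_append, ← List.rotate_eq_drop_append_take ht]

lemma rotate_posA_a (t : ℕ) (ht : t < w.length) (hta : w[t] = a) :
    (alphaM a b w).rotate (posA a b w t + 1) = eRot a b (w.rotate t) := by
  have hw : w = w.take t ++ w[t] :: w.drop (t+1) := by
    conv_lhs => rw [← List.take_append_drop t w, List.drop_eq_getElem_cons ht]
  have hv : alphaM a b w = (alphaM a b (w.take t) ++ [a]) ++ (b :: alphaM a b (w.drop (t+1))) := by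
    conv_lhs => rw [hw]
    rw [alphaM_append, alphaM_cons, hta, if_pos rfl]
    simp
  have hlen : (alphaM a b (w.take t) ++ [a]).length = posA a b w t + 1 := by
    simp [posA]
  have hle : posA a b w t + 1 ≤ (alphaM a b w).length := by
    rw [hv, List.length_append, ← hlen]; omega
  have hrot : w.rotate t = a :: (w.drop (t+1) ++ w.take t) := by
    rw [List.rotate_eq_drop_append_take (le_of_lt ht), List.drop_eq_getElem_cons ht, hta]
    simp
  rw [List.rotate_eq_drop_append_take hle, hv, List.drop_left' hlen, List.take_left' hlen,
    eRot, hrot]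
  simp [alphaM_append]

lemma head?_rotate (t : ℕ) (ht : t < w.length) : (w.rotate t).head? = some w[t] := by
  rw [List.rotate_eq_drop_append_take (le_of_lt ht), List.drop_eq_getElem_cons ht]
  rfl

lemma rotations_alphaM_perm (hw : w ≠ []) :
    (rotations (alphaM a b w)).Perm
      ((rotations w).map (alphaM a b) ++
        ((rotations w).filter (fun r => r.head? == some a)).map (eRot a b)) := by
  have hn : 0 < w.length := List.length_pos_iff.mpr hw
  have h1 : rotations (alphaM a b w)
      = (List.range w.length).flatMap
          (fun t => [alphaM a b (w.rotate t)] ++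
            (if w[t]? = some a then [eRot a b (w.rotate t)] else [])) := by
    rw [rotations, ← posA_length, ← range_flatMap_posA a b w w.length le_rfl, List.map_flatMap]
    refine List.flatMap_congr (fun t htm => ?_)
    have ht : t < w.length := List.mem_range.mp htm
    by_cases h : w[t] = a
    · rw [List.getElem?_eq_getElem ht, if_pos (by rw [h]), if_pos (by rw [h])]
      simp only [List.map_cons, List.map_nil]
      rw [rotate_posA a b w t (le_of_lt ht), rotate_posA_a a b w t ht h]
      rfl
    · rw [List.getElem?_eq_getElem ht, if_neg (by simpa using h), if_neg (by simpa using h)]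
      simp only [List.map_cons, List.map_nil]
      rw [rotate_posA a b w t (le_of_lt ht)]
      rfl
  have h2 := flatMap_append_perm (List.range w.length)
      (fun t => [alphaM a b (w.rotate t)])
      (fun t => (if w[t]? = some a then [eRot a b (w.rotate t)] else []))
  have h3 : (List.range w.length).flatMap (fun t => [alphaM a b (w.rotate t)])
      = (rotations w).map (alphaM a b) := by
    rw [rotations, List.map_map]
    induction (List.range w.length) with
    | nil => rfl
    | cons x l ih => simp [List.flatMap_cons, ih]
  have h4 : (List.range w.length).flatMap
        (fun t => (if w[t]? = some a then [eRot a b (w.rotate t)] else []))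
      = ((rotations w).filter (fun r => r.head? == some a)).map (eRot a b) := by
    rw [flatMap_if_singleton (List.range w.length) (fun t => w[t]? = some a)
      (fun t => eRot a b (w.rotate t))]
    rw [rotations, List.filter_map, List.map_map]
    congr 1
    refine List.filter_congr (fun t htm => ?_)
    have ht : t < w.length := List.mem_range.mp htm
    simp only [Function.comp, head?_rotate w t ht, List.getElem?_eq_getElem ht,
      Option.some.injEq]
    rfl
  rw [h1, ← h3, ← h4]
  exact h2

end Pos


section Alphabet

lemma filterMap_getLast?_eq_map (x : A) : ∀ (l : List (List A)), (∀ r ∈ l, r ≠ []) →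
    l.filterMap List.getLast? = l.map (fun r => r.getLastD x)
  | [], _ => rfl
  | r :: l, h => by
    have hr : r.getLast? = some (r.getLastD x) := by
      cases hrr : r.getLast? with
      | none => exact absurd (List.getLast?_eq_none_iff.mp hrr) (h r (List.mem_cons_self))
      | some y => rw [List.getLastD_eq_getLast?, hrr]; rfl
    rw [List.filterMap_cons, hr, List.map_cons,
      filterMap_getLast?_eq_map x l (fun r hrl => h r (List.mem_cons_of_mem _ hrl))]

lemma sortedAlphabet_fin (d : ℕ) : sortedAlphabet (stdLt (A := Fin d)) = List.finRange d := by
  refine sorted_eq_of_perm (Le := fun x y => (!(stdLt y x)) = true) ?_ ?_ ?_ ?_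
  · exact (List.mergeSort_perm _ _).trans
      (List.perm_of_nodup_nodup_toFinset_eq (Finset.nodup_toList _) (List.nodup_finRange d)
        (by ext x; simp))
  · exact List.pairwise_mergeSort
      (fun x y z hxy hyz => by
        simp only [stdLt, Bool.not_eq_true', decide_eq_false_iff_not, not_lt] at *
        exact le_trans hxy hyz)
      (fun x y => by
        simp only [stdLt, Bool.not_eq_true', decide_eq_false_iff_not, not_lt, Bool.or_eq_true]
        exact le_total x y)
      _
  · exact (List.pairwise_lt_finRange d).imp (fun h => by
      simp only [stdLt, Bool.not_eq_true', decide_eq_false_iff_not, not_lt]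
      exact le_of_lt h)
  · intro x _ y _ h1 h2
    simp only [stdLt, Bool.not_eq_true', decide_eq_false_iff_not, not_lt] at h1 h2
    exact le_antisymm h1 h2

lemma mem_take_finRange {d m : ℕ} {j : Fin d} (h : j ∈ (List.finRange d).take m) : (j:ℕ) < m := by
  rcases List.mem_iff_getElem.mp h with ⟨k, hk, rfl⟩
  have hk' : k < m := by
    have := hk; simp [List.length_take, List.length_finRange] at this; omega
  rw [List.getElem_take, List.getElem_finRange]
  simpa using hk'

lemma mem_drop_finRange {d m : ℕ} {j : Fin d} (h : j ∈ (List.finRange d).drop m) : m ≤ (j:ℕ) := by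
  rcases List.mem_iff_getElem.mp h with ⟨k, hk, rfl⟩
  rw [List.getElem_drop, List.getElem_finRange]
  simp

lemma finRange_split (d m : ℕ) (hm : m + 1 < d) :
    List.finRange d = (List.finRange d).take m ++ (⟨m, by omega⟩ : Fin d) ::
      (⟨m+1, hm⟩ : Fin d) :: (List.finRange d).drop (m+2) := by
  conv_lhs => rw [← List.take_append_drop m (List.finRange d)]
  congr 1
  have h1 : m < (List.finRange d).length := by rw [List.length_finRange]; omega
  have h2 : m + 1 < (List.finRange d).length := by rw [List.length_finRange]; omega
  rw [List.drop_eq_getElem_cons h1, List.drop_eq_getElem_cons h2,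
    List.getElem_finRange, List.getElem_finRange]
  rfl

lemma drop_finRange_getLast (d m : ℕ) (hm : m < d) :
    ∃ h : (List.finRange d).drop m ≠ [],
      ((List.finRange d).drop m).getLast h = (⟨d - 1, by omega⟩ : Fin d) := by
  have hlen : ((List.finRange d).drop m).length = d - m := by
    simp [List.length_finRange]
  have hne : (List.finRange d).drop m ≠ [] := by
    intro h; rw [h] at hlen; simp at hlen; omega
  refine ⟨hne, ?_⟩
  rw [List.getLast_eq_getElem, List.getElem_drop, List.getElem_finRange]
  apply Fin.ext
  simp [hlen]
  omega

lemma map_dropLast_drop_finRange (d m : ℕ) (τ : Fin d → Fin d)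
    (hτ : ∀ j : Fin d, m ≤ (j:ℕ) → (j:ℕ) < d - 1 → (τ j : ℕ) = (j:ℕ) + 1) :
    (((List.finRange d).drop m).dropLast).map τ = (List.finRange d).drop (m+1) := by
  apply List.ext_getElem
  · simp [List.length_finRange]
    omega
  · intro k h1 h2
    have hk : k < d - m - 1 := by
      simpa [List.length_finRange] using h1
    rw [List.getElem_map, List.getElem_dropLast, List.getElem_drop, List.getElem_drop,
      List.getElem_finRange, List.getElem_finRange, Fin.cast_mk, Fin.cast_mk]
    apply Fin.ext
    rw [hτ ⟨m + k, by omega⟩ (by simp) (by simp; omega)]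
    simp
    omega

end Alphabet

section Helpers

lemma eq_cons_of_head? {r : List A} {c : A} (h : r.head? = some c) : r = c :: r.tail := by
  cases r with
  | nil => simp at h
  | cons x t => simp at h; rw [h]; rfl

lemma rotate_one_cons (c : A) (t : List A) : (c :: t).rotate 1 = t ++ [c] := by
  have := List.rotate_cons_succ t c 0
  simpa using this

lemma mem_dropLast_drop_finRange {d m : ℕ} {j : Fin d}
    (h : j ∈ ((List.finRange d).drop m).dropLast) : m ≤ (j:ℕ) ∧ (j:ℕ) + 1 < d := by
  rcases List.mem_iff_getElem.mp h with ⟨k, hk, rfl⟩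
  have hk' : k < d - m - 1 := by simpa [List.length_finRange] using hk
  rw [List.getElem_dropLast, List.getElem_drop, List.getElem_finRange]
  simp
  omega

def tauPerm (d m : ℕ) (hm : m + 1 < d) : Equiv.Perm (Fin d) where
  toFun j := if (j:ℕ) ≤ m then j else if h : (j:ℕ) + 1 < d then ⟨(j:ℕ)+1, h⟩ else ⟨m+1, hm⟩
  invFun j := if (j:ℕ) ≤ m then j else if (j:ℕ) = m + 1 then ⟨d-1, by omega⟩
    else ⟨(j:ℕ)-1, lt_of_le_of_lt (Nat.sub_le _ _) j.isLt⟩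
  left_inv j := by
    have hj := j.isLt
    by_cases h1 : (j:ℕ) ≤ m <;> by_cases h3 : (j:ℕ)+1 < d <;>
      simp [h1, h3, Fin.ext_iff] <;> (try split_ifs) <;> simp_all <;> omega
  right_inv j := by
    have hj := j.isLt
    by_cases h1 : (j:ℕ) ≤ m <;> by_cases h2 : (j:ℕ) = m+1 <;>
      simp [h1, h2, Fin.ext_iff] <;> (try split_ifs) <;> simp_all <;> omega

lemma tauPerm_low {d m : ℕ} (hm : m + 1 < d) {j : Fin d} (h : (j:ℕ) ≤ m) :
    tauPerm d m hm j = j := by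
  simp [tauPerm, h]

lemma tauPerm_mid {d m : ℕ} (hm : m + 1 < d) {j : Fin d} (h1 : m < (j:ℕ)) (h2 : (j:ℕ) + 1 < d) :
    tauPerm d m hm j = ⟨(j:ℕ)+1, h2⟩ := by
  simp [tauPerm, Nat.not_le_of_lt h1, h2]

lemma tauPerm_top {d m : ℕ} (hm : m + 1 < d) {j : Fin d} (h : (j:ℕ) = d - 1) :
    tauPerm d m hm j = ⟨m+1, hm⟩ := by
  have h1 : ¬ (j:ℕ) ≤ m := by omega
  have h2 : ¬ (j:ℕ) + 1 < d := by have := j.isLt; omega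
  simp [tauPerm, h1, h2]

end Helpers

lemma finRange_split1 (d m : ℕ) (hm : m < d) :
    List.finRange d = (List.finRange d).take m ++ (⟨m, hm⟩ : Fin d) ::
      (List.finRange d).drop (m+1) := by
  conv_lhs => rw [← List.take_append_drop m (List.finRange d)]
  congr 1
  have h1 : m < (List.finRange d).length := by rw [List.length_finRange]; omega
  rw [List.drop_eq_getElem_cons h1, List.getElem_finRange]
  rfl





lemma count_congr_inst {G : Type*} (i1 i2 : DecidableEq G) (x : G) (l : List G) :
    @List.count _ (@instBEqOfDecidableEq _ i1) x l = @List.count _ (@instBEqOfDecidableEq _ i2) x l := by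
  rw [Subsingleton.elim i1 i2]

/-- Lemma (case 3): if `w` is primitive and `π`-clustering over `A = {a₁ < ⋯ < a_d}`,
`b = a_d`, `π⁻¹(b) = a_i` and `π⁻¹(a) = a_{i+1}` with `1 ≤ i < d`, then `α_{a,b}(w)` is
`π'`-clustering over `A` for some permutation `π'`. -/
theorem clustering_alpha_lastLetter (d : ℕ) (π : Equiv.Perm (Fin d)) (a b : Fin d)
    (hab : a ≠ b) (w : List (Fin d)) (hprim : Primitive w) (hcl : IsClustering π w)
    (i : Fin d) (hi : (i : ℕ) + 1 < d)
    (hb : (b : ℕ) = d - 1) (hib : π.symm b = i) (hia : π.symm a = ⟨(i : ℕ) + 1, hi⟩) :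
    ∃ π' : Equiv.Perm (Fin d), IsClustering π' (alphaM a b w) := by
  classical
  have hw : w ≠ [] := hprim.1
  have hn0 : 0 < w.length := List.length_pos_iff.mpr hw
  have hπi : π i = b := by rw [← hib, Equiv.apply_symm_apply]
  have hπiS : π ⟨(i:ℕ)+1, hi⟩ = a := by rw [← hia, Equiv.apply_symm_apply]
  have hab' : a < b := by
    rw [Fin.lt_def, hb]
    have h1 := a.isLt
    have h2 : (a:ℕ) ≠ (b:ℕ) := fun hh => hab (Fin.ext hh)
    rw [hb] at h2
    omega
  have hbmax : ∀ c : Fin d, (c:ℕ) ≤ (b:ℕ) := fun c => by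
    have := c.isLt; omega
  set g : List (Fin d) → Fin d := fun r => r.getLastD a with hg
  set R := (rotations w).mergeSort (lexLe stdLt) with hR
  have hRperm : R.Perm (rotations w) := List.mergeSort_perm _ _
  have hmemR : ∀ r ∈ R, r ∈ rotations w := fun r hr => hRperm.subset hr
  have hmemR' : ∀ r ∈ rotations w, r ∈ R := fun r hr => hRperm.symm.subset hr
  have hlenR : ∀ r ∈ R, r.length = w.length := fun r hr => length_of_mem_rotations (hmemR r hr)
  have hneR : ∀ r ∈ R, r ≠ [] := fun r hr => ne_nil_of_mem_rotations hw (hmemR r hr)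
  have hRsorted : R.Pairwise (fun x y => lexLe stdLt x y = true) :=
    List.pairwise_mergeSort (fun x y z h1 h2 => lexLe_trans x y z h1 h2)
      (fun x y => by rcases lexLe_total x y with h|h <;> simp [h]) _
  set B : Fin d → List (Fin d) :=
    fun c => List.replicate (w.count (π c)) (π c) with hB
  have hbw : bwtBy stdLt w = (List.finRange d).flatMap B := by
    have hcl' := hcl
    simp only [IsClustering, IsClusteringBy, sortedAlphabet_fin] at hcl'
    rw [hB, hcl']
  have hLmap : R.map g = (List.finRange d).flatMap B := by
    have h0 : bwtBy stdLt w = R.filterMap List.getLast? := rfl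
    rw [← filterMap_getLast?_eq_map a R hneR, ← h0]
    exact hbw
  -- block decomposition
  set ka := w.count a with hka
  set kb := w.count b with hkb
  set T1 := (List.finRange d).take (i:ℕ) with hT1
  set T2 := (List.finRange d).drop ((i:ℕ)+2) with hT2
  have hBi : B i = List.replicate kb b := by simp only [hB, hπi, hkb]
  have hBiS : B ⟨(i:ℕ)+1, hi⟩ = List.replicate ka a := by simp only [hB, hπiS, hka]
  have hblocks : (List.finRange d).flatMap B
      = T1.flatMap B ++ (List.replicate kb b ++ (List.replicate ka a ++ T2.flatMap B)) := by
    conv_lhs => rw [finRange_split d (i:ℕ) hi]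
    rw [List.flatMap_append, List.flatMap_cons, List.flatMap_cons]
    rw [Fin.eta, hBi, hBiS]
  have hC : ∀ c ∈ T1.flatMap B, c ≠ a ∧ c ≠ b := by
    intro c hc
    rcases List.mem_flatMap.mp hc with ⟨j, hjT1, hcB⟩
    have hcj : c = π j := List.eq_of_mem_replicate hcB
    have hji : (j:ℕ) < (i:ℕ) := mem_take_finRange hjT1
    constructor
    · intro hca
      have : j = π.symm a := by rw [Equiv.eq_symm_apply, ← hcj, hca]
      rw [hia] at this
      rw [this] at hji
      simp at hji
    · intro hcb
      have : j = π.symm b := by rw [Equiv.eq_symm_apply, ← hcj, hcb]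
      rw [hib] at this
      rw [this] at hji
      omega
  have hD : ∀ c ∈ T2.flatMap B, c ≠ a ∧ c ≠ b := by
    intro c hc
    rcases List.mem_flatMap.mp hc with ⟨j, hjT2, hcB⟩
    have hcj : c = π j := List.eq_of_mem_replicate hcB
    have hji : (i:ℕ)+2 ≤ (j:ℕ) := mem_drop_finRange hjT2
    constructor
    · intro hca
      have : j = π.symm a := by rw [Equiv.eq_symm_apply, ← hcj, hca]
      rw [hia] at this
      rw [this] at hji
      simp at hji
    · intro hcb
      have : j = π.symm b := by rw [Equiv.eq_symm_apply, ← hcj, hcb]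
      rw [hib] at this
      rw [this] at hji
      omega
  -- split R along the blocks
  obtain ⟨R1, R234, hRsplit1, hmapR1, hmap234⟩ :=
    List.map_eq_append_iff.mp (hLmap.trans hblocks)
  obtain ⟨R2, R34, hRsplit2, hmapR2, hmap34⟩ := List.map_eq_append_iff.mp hmap234
  obtain ⟨R3, R4, hRsplit3, hmapR3, hmapR4⟩ := List.map_eq_append_iff.mp hmap34
  have hRdecomp : R = R1 ++ (R2 ++ (R3 ++ R4)) := by rw [hRsplit1, hRsplit2, hRsplit3]
  have key : ∀ x ∈ R, ∀ y ∈ R, g x = b → g y = a → lexLe stdLt x y = true := by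
    intro x hx y hy hgx hgy
    have hx2 : x ∈ R2 := by
      have hx' := hx
      rw [hRdecomp] at hx'
      rcases List.mem_append.mp hx' with h1 | h1
      · exfalso
        have : g x ∈ T1.flatMap B := hmapR1 ▸ List.mem_map_of_mem (f := g) h1
        exact (hC _ this).2 hgx
      rcases List.mem_append.mp h1 with h2 | h2
      · exact h2
      rcases List.mem_append.mp h2 with h3 | h3
      · exfalso
        have : g x ∈ List.replicate ka a := hmapR3 ▸ List.mem_map_of_mem (f := g) h3
        exact hab (hgx ▸ (List.eq_of_mem_replicate this)).symm
      · exfalso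
        have : g x ∈ T2.flatMap B := hmapR4 ▸ List.mem_map_of_mem (f := g) h3
        exact (hD _ this).2 hgx
    have hy3 : y ∈ R3 := by
      have hy' := hy
      rw [hRdecomp] at hy'
      rcases List.mem_append.mp hy' with h1 | h1
      · exfalso
        have : g y ∈ T1.flatMap B := hmapR1 ▸ List.mem_map_of_mem (f := g) h1
        exact (hC _ this).1 hgy
      rcases List.mem_append.mp h1 with h2 | h2
      · exfalso
        have : g y ∈ List.replicate kb b := hmapR2 ▸ List.mem_map_of_mem (f := g) h2
        exact hab (hgy.symm.trans (List.eq_of_mem_replicate this))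
      rcases List.mem_append.mp h2 with h3 | h3
      · exact h3
      · exfalso
        have : g y ∈ T2.flatMap B := hmapR4 ▸ List.mem_map_of_mem (f := g) h3
        exact (hD _ this).1 hgy
    have hP : ((R1 ++ R2) ++ (R3 ++ R4)).Pairwise (fun x y => lexLe stdLt x y = true) := by
      have := hRsorted
      rw [hRdecomp] at this
      simpa [List.append_assoc] using this
    exact (List.pairwise_append.mp hP).2.2 x (List.mem_append.mpr (Or.inr hx2)) y
      (List.mem_append.mpr (Or.inl hy3))
  -- the sorted list of rotations of the image
  set pA : List (Fin d) → Bool := fun r => r.head? == some a with hpA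
  set S := R.map (alphaM a b) ++ (R.filter pA).map (eRot a b) with hS
  have hSperm : S.Perm (rotations (alphaM a b w)) := by
    refine List.Perm.trans ?_ (rotations_alphaM_perm a b w hw).symm
    exact List.Perm.append (hRperm.map _) ((hRperm.filter pA).map _)
  have hSsorted : S.Pairwise (fun x y => lexLe stdLt x y = true) := by
    rw [List.pairwise_append]
    refine ⟨?_, ?_, ?_⟩
    · rw [List.pairwise_map]
      refine (List.Pairwise.and_mem.mp hRsorted).imp ?_
      rintro x y ⟨hx, hy, hxy⟩
      have := lexLe_alphaM_append a b [] x y ((hlenR x hx).trans (hlenR y hy).symm) hxy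
      simpa using this
    · rw [List.pairwise_map]
      refine (List.Pairwise.and_mem.mp (hRsorted.filter pA)).imp ?_
      rintro x y ⟨hxf, hyf, hxy⟩
      obtain ⟨hxR, hxa⟩ := List.mem_filter.mp hxf
      obtain ⟨hyR, hya⟩ := List.mem_filter.mp hyf
      have hxc : x = a :: x.tail := eq_cons_of_head? (by simpa [hpA] using hxa)
      have hyc : y = a :: y.tail := eq_cons_of_head? (by simpa [hpA] using hya)
      have hlt : lexLe stdLt x.tail y.tail = true := by
        rw [hxc, hyc, lexLe_cons_same] at hxy
        exact hxy
      have hlen : x.tail.length = y.tail.length := by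
        have h1 := hlenR x hxR
        have h2 := hlenR y hyR
        rw [hxc] at h1
        rw [hyc] at h2
        simp only [List.length_cons] at h1 h2
        omega
      show lexLe stdLt (eRot a b x) (eRot a b y) = true
      rw [eRot, eRot, lexLe_cons_same]
      exact lexLe_alphaM_append a b [a] x.tail y.tail hlen hlt
    · rintro x' hx' y' hy'
      rcases List.mem_map.mp hx' with ⟨r, hrR, rfl⟩
      rcases List.mem_map.mp hy' with ⟨r', hr'f, rfl⟩
      obtain ⟨hr'R, hr'a⟩ := List.mem_filter.mp hr'f
      have hr'c : r' = a :: r'.tail := eq_cons_of_head? (by simpa [hpA] using hr'a)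
      obtain ⟨c, t, rfl⟩ : ∃ c t, r = c :: t := by
        cases r with
        | nil => exact absurd rfl (hneR _ hrR)
        | cons c t => exact ⟨c, t, rfl⟩
      rcases lt_or_eq_of_le (hbmax c) with hc | hc
      · rw [alphaM_cons_head]
        show lexLe stdLt (c :: _) (b :: _) = true
        exact lexLe_cons_lt (by rwa [Fin.lt_def]) _ _
      · have hcb : c = b := Fin.ext hc
        have hca : c ≠ a := fun h => hab (h ▸ hcb)
        rw [alphaM_cons_head, if_neg hca, List.nil_append, hcb]
        show lexLe stdLt (b :: alphaM a b t) (b :: (alphaM a b r'.tail ++ [a])) = true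
        rw [lexLe_cons_same]
        have h1 : (t ++ [b]) ∈ R := by
          apply hmemR'
          have := rotate_one_mem_rotations hw (hmemR _ hrR)
          rw [rotate_one_cons, hcb] at this
          exact this
        have h2 : (r'.tail ++ [a]) ∈ R := by
          apply hmemR'
          have := rotate_one_mem_rotations hw (hmemR _ hr'R)
          rw [hr'c, rotate_one_cons] at this
          exact this
        have hkey := key _ h1 _ h2 (by simp [hg]) (by simp [hg])
        have hlen : t.length = r'.tail.length := by
          have e1 := hlenR _ hrR
          have e2 := hlenR _ hr'R
          rw [hr'c] at e2
          simp only [List.length_cons] at e1 e2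
          omega
        have := lexLe_alphaM_strict a b hab' t r'.tail hlen hkey [] [a]
        simpa using this
  have hSne : ∀ r ∈ S, r ≠ [] := by
    intro r hr
    rcases List.mem_append.mp hr with h | h
    · rcases List.mem_map.mp h with ⟨r₀, hr₀, rfl⟩
      exact alphaM_ne_nil a b r₀ (hneR _ hr₀)
    · rcases List.mem_map.mp h with ⟨r₀, _, rfl⟩
      exact List.cons_ne_nil _ _
  have hsortv : (rotations (alphaM a b w)).mergeSort (lexLe stdLt) = S := by
    refine sorted_eq_of_perm ((List.mergeSort_perm _ _).trans hSperm.symm)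
      (List.pairwise_mergeSort (fun x y z h1 h2 => lexLe_trans x y z h1 h2)
        (fun x y => by rcases lexLe_total x y with h|h <;> simp [h]) _) hSsorted ?_
    intro x hx y hy h1 h2
    refine lexLe_antisymm x y ?_ h1 h2
    have hx' : x ∈ rotations (alphaM a b w) :=
      (List.mergeSort_perm (rotations (alphaM a b w)) (lexLe stdLt)).subset hx
    have hy' : y ∈ rotations (alphaM a b w) := hSperm.subset hy
    rw [length_of_mem_rotations hx', length_of_mem_rotations hy']
  -- the BWT of the image
  set f : Fin d → Fin d := fun c => if c = a then b else c with hf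
  have hlenE : (R.filter pA).length = ka := by
    have h1 := hSperm.length_eq
    have h2 : (rotations (alphaM a b w)).length = w.length + ka := by
      simp [rotations, length_alphaM, hka]
    have h3 : R.length = w.length := by
      rw [hRperm.length_eq]; simp [rotations]
    rw [hS] at h1
    simp only [List.length_append, List.length_map] at h1
    omega
  have hbwtv : bwtBy stdLt (alphaM a b w)
      = (R.map g).map f ++ List.replicate ka a := by
    have h0 : bwtBy stdLt (alphaM a b w) = S.filterMap List.getLast? := by
      rw [bwtBy, hsortv]
    rw [h0, filterMap_getLast?_eq_map a S hSne, hS, List.map_append, List.map_map, List.map_map,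
      List.map_map]
    congr 1
    · apply List.map_congr_left
      intro r hrR
      rcases List.eq_nil_or_concat r with rfl | ⟨u, c, rfl⟩
      · exact absurd rfl (hneR _ hrR)
      · show (alphaM a b (u.concat c)).getLastD a = f ((u.concat c).getLastD a)
        rw [List.concat_eq_append, alphaM_concat_getLastD, List.getLastD_concat, hf]
    · have : ∀ r ∈ R.filter pA, ((fun r => r.getLastD a) ∘ eRot a b) r = a := by
        intro r _
        show (eRot a b r).getLastD a = a
        rw [eRot]
        have : b :: (alphaM a b r.tail ++ [a]) = (b :: alphaM a b r.tail) ++ [a] := by simp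
        rw [this, List.getLastD_concat]
      rw [List.map_congr_left this]
      rw [List.map_const', hlenE]
  -- conclusion
  set π' : Equiv.Perm (Fin d) := (tauPerm d (i:ℕ) hi).trans π with hπ'
  set B' : Fin d → List (Fin d) :=
    fun c => List.replicate ((alphaM a b w).count (π' c)) (π' c) with hB'
  have hπ'eq : ∀ j : Fin d, π' j = π (tauPerm d (i:ℕ) hi j) := fun j => rfl
  have hd1 : (i:ℕ) < d := by omega
  obtain ⟨hne2, hlast⟩ := drop_finRange_getLast d ((i:ℕ)+1) hi
  have hrhs : (List.finRange d).flatMap B'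
      = T1.flatMap B' ++ (B' i ++ ((((List.finRange d).drop ((i:ℕ)+1)).dropLast).flatMap B'
          ++ B' ⟨d-1, by omega⟩)) := by
    conv_lhs => rw [finRange_split1 d (i:ℕ) hd1]
    rw [List.flatMap_append, List.flatMap_cons, Fin.eta]
    congr 2
    conv_lhs => rw [← List.dropLast_append_getLast hne2]
    rw [List.flatMap_append, hlast]
    simp
  have hcount_ne : ∀ c : Fin d, c ≠ b → (alphaM a b w).count c = w.count c := by
    intro c hc
    rw [count_alphaM a b hab c w, if_neg hc]
    omega
  have hE1 : (T1.flatMap B).map f = T1.flatMap B' := by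
    rw [List.map_flatMap]
    refine List.flatMap_congr (fun j hj => ?_)
    have hji : (j:ℕ) < (i:ℕ) := mem_take_finRange hj
    have hja : π j ≠ a := by
      intro h
      have : j = π.symm a := by rw [Equiv.eq_symm_apply, h]
      rw [hia] at this; rw [this] at hji; simp at hji
    have hjb : π j ≠ b := by
      intro h
      have : j = π.symm b := by rw [Equiv.eq_symm_apply, h]
      rw [hib] at this; rw [this] at hji; omega
    simp only [hB, hB', List.map_replicate, hf]
    simp only [if_neg hja]
    rw [hπ'eq, tauPerm_low hi (le_of_lt hji), hcount_ne (π j) hjb]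
  have hE2 : List.replicate kb (f b) ++ List.replicate ka (f a) = B' i := by
    have hfb : f b = b := by simp only [hf, ite_self]
    have hfa : f a = b := by simp only [hf, if_pos rfl]
    rw [hfb, hfa, ← List.replicate_add]
    simp only [hB']
    rw [hπ'eq, tauPerm_low hi le_rfl, hπi, count_alphaM a b hab b w, if_pos rfl, hka, hkb]
  have hE3a : (T2.flatMap B).map f = T2.flatMap B := by
    rw [List.map_flatMap]
    refine List.flatMap_congr (fun j hj => ?_)
    have hji : (i:ℕ)+2 ≤ (j:ℕ) := mem_drop_finRange hj
    have hja : π j ≠ a := by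
      intro h
      have : j = π.symm a := by rw [Equiv.eq_symm_apply, h]
      rw [hia] at this; rw [this] at hji; simp at hji
    simp only [hB, List.map_replicate, hf]
    simp only [if_neg hja]
  have hE3b : (((List.finRange d).drop ((i:ℕ)+1)).dropLast).flatMap B' = T2.flatMap B := by
    have hmap := map_dropLast_drop_finRange d ((i:ℕ)+1) (tauPerm d (i:ℕ) hi)
      (fun j hj1 hj2 => by rw [tauPerm_mid hi (by omega) (by omega)])
    rw [hT2]
    have h21 : (i:ℕ) + 2 = (i:ℕ) + 1 + 1 := rfl
    rw [h21, ← hmap, List.flatMap_map]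
    refine List.flatMap_congr (fun j hj => ?_)
    obtain ⟨hj1, hj2⟩ := mem_dropLast_drop_finRange hj
    have hτj : tauPerm d (i:ℕ) hi j = ⟨(j:ℕ)+1, hj2⟩ := tauPerm_mid hi (by omega) hj2
    have hπτb : π (tauPerm d (i:ℕ) hi j) ≠ b := by
      intro h
      have : tauPerm d (i:ℕ) hi j = π.symm b := by rw [Equiv.eq_symm_apply, h]
      rw [hib, hτj] at this
      have := congrArg Fin.val this
      simp at this
      omega
    simp only [hB', hB]
    rw [hπ'eq, hcount_ne _ hπτb]
  have hE4 : List.replicate ka a = B' ⟨d-1, by omega⟩ := by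
    have hτtop : tauPerm d (i:ℕ) hi ⟨d-1, by omega⟩ = ⟨(i:ℕ)+1, hi⟩ :=
      tauPerm_top hi rfl
    simp only [hB']
    rw [hπ'eq, hτtop, hπiS, hcount_ne a hab, hka]
  have hmain : bwtBy stdLt (alphaM a b w) = (List.finRange d).flatMap B' := by
    rw [hbwtv, hLmap, hblocks, hrhs, List.map_append, List.map_append, List.map_append,
      List.map_replicate, List.map_replicate, hE1, ← hE2, hE3a, hE3b, ← hE4]
    simp [List.append_assoc]
  refine ⟨π', ?_⟩
  simp only [IsClustering, IsClusteringBy, sortedAlphabet_fin]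
  refine hmain.trans (List.flatMap_congr (fun c _ => ?_))
  simp only [hB']

end BWTpaper
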